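/- Let H be a subgroup of a group G with inclusion ι : H → G, let K and M be cocomplete categories, F : K → M a functor, and C : BG → K a functor. Then there is a natural isomorphism F_{res^G_H C} ≅ F_C ∘ ind_ι of functors PSh(HOrb) → M, where res^G_H C := C ∘ Bι. -/

import Mathlib

/-!
Statement 14: natural isomorphism F_{res^G_H C} ≅ F_C ∘ ind_ι.

Throughout, `GOrb G` is the orbit category of the group `G` (objects: nonempty transitive
`G`-sets; morphisms: equivariant maps), `GOrb.pt G` its terminal object `G/G`,
`SubgroupFamily G` the families of subgroups, `FamOrb G 𝓕` the full subcategory `G_𝓕Orb`,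
`PSh G` the presheaf category, `asm` the assembly map, `jG : BG ⥤ GOrb` the canonical
inclusion (`BG = SingleObj G`), and left Kan extensions are encoded by a functor together
with a natural transformation exhibiting it as a left Kan extension
(`Functor.IsLeftKanExtension`).  Cocompleteness is expressed by `HasColimitsOfSize.{u, u+1}`,
the size of the orbit category and its subcategories.
-/

open CategoryTheory Limits

universe u v w v' w'

namespace FJ

variable (G : Type u) [Group G]

/-- The orbit category of `G`: objects are (nonempty) transitive `G`-sets, morphisms are
`G`-equivariant maps. -/
structure GOrb : Type (u + 1) where
  α : Type u
  [act : MulAction G α]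
  pretrans : MulAction.IsPretransitive G α
  nonempty : Nonempty α

attribute [instance] GOrb.act

variable {G}

/-- Equivariant maps of transitive `G`-sets. -/
@[ext]
structure OrbHom (X Y : GOrb G) : Type u where
  toFun : X.α → Y.α
  map_smul : ∀ (g : G) (x : X.α), toFun (g • x) = g • toFun x

instance : Category.{u} (GOrb G) where
  Hom X Y := OrbHom X Y
  id X := ⟨_root_.id, fun _ _ => rfl⟩
  comp f g := ⟨g.toFun ∘ f.toFun, fun a x => by
    simp only [Function.comp_apply, f.map_smul, g.map_smul]⟩
  id_comp f := OrbHom.ext rfl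
  comp_id f := OrbHom.ext rfl
  assoc f g h := OrbHom.ext rfl

variable (G)

/-- The one-point orbit `G/G`, the terminal object of the orbit category. -/
def GOrb.pt : GOrb G where
  α := PUnit
  pretrans := ⟨fun x y => ⟨1, Subsingleton.elim _ _⟩⟩
  nonempty := ⟨PUnit.unit⟩

variable {G}

/-- The unique morphism to the one-point orbit. -/
def toPt (X : GOrb G) : X ⟶ GOrb.pt G :=
  ⟨fun _ => PUnit.unit, fun _ _ => rfl⟩

instance (X : GOrb G) : Subsingleton (X ⟶ GOrb.pt G) :=
  ⟨fun f g => OrbHom.ext (funext fun _ => rfl)⟩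

variable (G)

/-- A family of subgroups of `G`: a nonempty collection of subgroups closed under conjugation
and under passing to subgroups. -/
structure SubgroupFamily where
  carrier : Set (Subgroup G)
  nonempty : carrier.Nonempty
  conj_mem : ∀ (H : Subgroup G) (g : G),
    H ∈ carrier → H.map (MulAut.conj g).toMonoidHom ∈ carrier
  le_mem : ∀ H K : Subgroup G, H ≤ K → K ∈ carrier → H ∈ carrier

/-- The full subcategory `G_𝓕Orb` of orbits with stabilizers in the family `𝓕`. -/
abbrev FamOrb (𝓕 : SubgroupFamily G) : Type (u + 1) :=
  ObjectProperty.FullSubcategory (fun X : GOrb G => ∀ x : X.α, MulAction.stabilizer G x ∈ 𝓕.carrier)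

/-- The category of `Set`-valued presheaves on the orbit category. -/
abbrev PSh := (GOrb G)ᵒᵖ ⥤ Type u

variable {G}

section Assembly

variable {M : Type v'} [Category.{w'} M]

/-- The cocone over `F` restricted to `G_𝓕Orb` with vertex `F(G/G)`. -/
def asmCocone (𝓕 : SubgroupFamily G) (F : GOrb G ⥤ M) :
    Cocone (ObjectProperty.ι _ ⋙ F :
      FamOrb G 𝓕 ⥤ M) where
  pt := F.obj (GOrb.pt G)
  ι :=
    { app := fun X => F.map (toPt X.obj)
      naturality := fun X Y f => by
        dsimp
        rw [Category.comp_id, ← F.map_comp]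
        exact congrArg F.map (Subsingleton.elim _ _) }

/-- The assembly map `colim_{G_𝓕Orb} F ⟶ F(G/G)`. -/
noncomputable def asm (𝓕 : SubgroupFamily G) (F : GOrb G ⥤ M)
    [HasColimit (ObjectProperty.ι _ ⋙ F : FamOrb G 𝓕 ⥤ M)] :
    colimit (ObjectProperty.ι _ ⋙ F : FamOrb G 𝓕 ⥤ M) ⟶ F.obj (GOrb.pt G) :=
  colimit.desc _ (asmCocone 𝓕 F)

end Assembly

end FJ

namespace FJ

variable {G : Type u} [Group G]

variable (G) in
/-- The transitive `G`-set `G` (left translation). -/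
@[reducible] def selfOrb : GOrb G where
  α := G
  pretrans := ⟨fun x y => ⟨y * x⁻¹, by simp [smul_eq_mul]⟩⟩
  nonempty := ⟨1⟩

/-- The group element underlying a morphism in `BG = SingleObj G`. -/
def un {x y : SingleObj G} (g : x ⟶ y) : G := g

variable (G) in
/-- Right multiplication by `g⁻¹`, as an equivariant self-map of the `G`-set `G`. -/
def rmul (g : G) : selfOrb G ⟶ selfOrb G :=
  ⟨fun a => a * g⁻¹, fun h a => by simp [smul_eq_mul, mul_assoc]⟩

variable (G) in
/-- The canonical inclusion `j^G : BG ⟶ GOrb`, sending the unique object to the `G`-set `G`. -/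
def jG : SingleObj G ⥤ GOrb G where
  obj _ := selfOrb G
  map g := rmul G (un g)
  map_id x := OrbHom.ext (funext fun a => by
    have h1 : un (𝟙 x) = 1 := rfl
    show a * (un (𝟙 x))⁻¹ = a
    rw [h1, inv_one, mul_one])
  map_comp {x y z} f g := OrbHom.ext (funext fun a => by
    have h1 : un (f ≫ g) = un g * un f := rfl
    show a * (un (f ≫ g))⁻¹ = (a * (un f)⁻¹) * (un g)⁻¹
    rw [h1, mul_inv_rev, mul_assoc])

/-- The functor `Bφ : BH ⟶ BG` induced by a group homomorphism. -/
def Bhom {H : Type v} [Group H] (φ : H →* G) : SingleObj H ⥤ SingleObj G :=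
  SingleObj.mapHom H G φ

/-- The family `φ*𝓕 = {K ≤ H ∣ φ(K) ∈ 𝓕}` induced by a group homomorphism. -/
def comapFam {H : Type v} [Group H] (φ : H →* G) (𝓕 : SubgroupFamily G) :
    SubgroupFamily H where
  carrier := {K : Subgroup H | K.map φ ∈ 𝓕.carrier}
  nonempty := by
    obtain ⟨S, hS⟩ := 𝓕.nonempty
    refine ⟨⊥, ?_⟩
    have hbot : (⊥ : Subgroup H).map φ = ⊥ := by simp
    simp only [Set.mem_setOf_eq, hbot]
    exact 𝓕.le_mem ⊥ S bot_le hS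
  conj_mem := fun K h hK => by
    simp only [Set.mem_setOf_eq]
    have heq : (K.map (MulAut.conj h).toMonoidHom).map φ =
        (K.map φ).map (MulAut.conj (φ h)).toMonoidHom := by
      rw [Subgroup.map_map, Subgroup.map_map]
      congr 1
      ext x
      simp [MulAut.conj]
    rw [heq]
    exact 𝓕.conj_mem _ (φ h) hK
  le_mem := fun K L h hL => 𝓕.le_mem _ _ (Subgroup.map_mono h) hL

end FJ

namespace FJ

variable {G H : Type u} [Group G] [Group H]

/-- The relation defining `G ×_φ S`: `(g·φ(h), s) ∼ (g, h·s)`. -/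
def indSetoid (φ : H →* G) (S : GOrb H) : Setoid (G × S.α) where
  r p q := ∃ h : H, p.1 = q.1 * φ h ∧ q.2 = h • p.2
  iseqv := by
    constructor
    · intro p
      exact ⟨1, by simp, by simp⟩
    · rintro p q ⟨h, h1, h2⟩
      refine ⟨h⁻¹, ?_, ?_⟩
      · rw [h1]; simp
      · rw [h2]; simp
    · rintro p q r ⟨h, h1, h2⟩ ⟨k, k1, k2⟩
      refine ⟨k * h, ?_, ?_⟩
      · rw [h1, k1, map_mul, mul_assoc]
      · rw [k2, h2, mul_smul]

instance indAction (φ : H →* G) (S : GOrb H) : MulAction G (Quotient (indSetoid φ S)) where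
  smul g := Quotient.map (fun p => (g * p.1, p.2))
    (by rintro p q ⟨h, h1, h2⟩; exact ⟨h, by dsimp only; rw [h1, mul_assoc], h2⟩)
  one_smul x := by
    induction x using Quotient.ind
    exact congrArg (Quotient.mk _) (by simp)
  mul_smul g g' x := by
    induction x using Quotient.ind
    exact congrArg (Quotient.mk _) (by simp [mul_assoc])

lemma indSmul_mk (φ : H →* G) (S : GOrb H) (g : G) (p : G × S.α) :
    g • (Quotient.mk (indSetoid φ S) p) = Quotient.mk _ (g * p.1, p.2) := rfl

/-- The induced transitive `G`-set `G ×_φ S`. -/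
def indObj (φ : H →* G) (S : GOrb H) : GOrb G where
  α := Quotient (indSetoid φ S)
  pretrans := by
    refine ⟨fun x y => ?_⟩
    induction x using Quotient.ind with | _ p =>
    induction y using Quotient.ind with | _ q =>
    obtain ⟨h, hh⟩ := S.pretrans.exists_smul_eq p.2 q.2
    refine ⟨(q.1 * φ h) * p.1⁻¹, ?_⟩
    rw [indSmul_mk]
    refine Quotient.sound ?_
    exact ⟨h, by dsimp only; rw [inv_mul_cancel_right], by dsimp only; rw [hh]⟩
  nonempty := ⟨Quotient.mk _ (1, S.nonempty.some)⟩

/-- The induction functor on morphisms. -/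
def indMap (φ : H →* G) {S T : GOrb H} (f : S ⟶ T) : indObj φ S ⟶ indObj φ T where
  toFun := Quotient.map (fun p => (p.1, f.toFun p.2))
    (by rintro p q ⟨h, h1, h2⟩; exact ⟨h, h1, by dsimp only; rw [h2, f.map_smul]⟩)
  map_smul := by
    rintro g ⟨p⟩
    rfl

/-- The induction functor `G ×_φ - : HOrb ⥤ GOrb` of a group homomorphism `φ : H → G`. -/
def indOrb (φ : H →* G) : GOrb H ⥤ GOrb G where
  obj := indObj φ
  map := indMap φ
  map_id S := OrbHom.ext (funext (by rintro ⟨p⟩; rfl))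
  map_comp f g := OrbHom.ext (funext (by rintro ⟨p⟩; rfl))

/-- The restriction functor `res_φ : PSh(GOrb) ⥤ PSh(HOrb)`, precomposition with the
induction functor. -/
def resPsh (φ : H →* G) : PSh G ⥤ PSh H :=
  (Functor.whiskeringLeft (GOrb H)ᵒᵖ (GOrb G)ᵒᵖ (Type u)).obj (indOrb φ).op

end FJ

namespace FJ

variable {G : Type u} [Group G] {M : Type v'} [Category.{w'} M]

/-- The relative assembly map
`colim_{G_{𝓕'}Orb} F ⟶ colim_{G_𝓕Orb} F` induced by an inclusion `𝓕' ⊆ 𝓕` of families. -/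
noncomputable def relAsm (𝓕' 𝓕 : SubgroupFamily G)
    (hsub : ∀ S : Subgroup G, S ∈ 𝓕'.carrier → S ∈ 𝓕.carrier) (F : GOrb G ⥤ M)
    [HasColimit (ObjectProperty.ι _ ⋙ F : FamOrb G 𝓕' ⥤ M)]
    [HasColimit (ObjectProperty.ι _ ⋙ F : FamOrb G 𝓕 ⥤ M)] :
    colimit (ObjectProperty.ι _ ⋙ F : FamOrb G 𝓕' ⥤ M) ⟶
      colimit (ObjectProperty.ι _ ⋙ F : FamOrb G 𝓕 ⥤ M) :=
  colimit.desc _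
    { pt := colimit (ObjectProperty.ι _ ⋙ F : FamOrb G 𝓕 ⥤ M)
      ι :=
        { app := fun X => colimit.ι (ObjectProperty.ι _ ⋙ F : FamOrb G 𝓕 ⥤ M)
            ⟨X.obj, fun x => hsub _ (X.property x)⟩
          naturality := fun X Y f => by
            dsimp
            rw [Category.comp_id]
            exact colimit.w (ObjectProperty.ι _ ⋙ F : FamOrb G 𝓕 ⥤ M)
              (show (⟨X.obj, fun x => hsub _ (X.property x)⟩ : FamOrb G 𝓕) ⟶
                ⟨Y.obj, fun x => hsub _ (Y.property x)⟩ from ObjectProperty.homMk f.hom) } }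

end FJ

namespace FJ

end FJ

namespace FJ

open CategoryTheory Limits

section Aux

variable {G : Type u} [Group G] (H : Subgroup G)

lemma hom_toFun_eq {G' : Type u} [Group G'] {S : GOrb G'} (f : selfOrb G' ⟶ S) (x : G') :
    f.toFun x = x • f.toFun 1 := by
  have := f.map_smul x 1
  rwa [smul_eq_mul, mul_one] at this

/-- The `G`-map `selfOrb G ⟶ indObj ι S` induced by an `H`-map `f : selfOrb H ⟶ S`,
sending `g` to `[g, f(1)]`. -/
def indHom {S : GOrb ↥H} (f : selfOrb ↥H ⟶ S) : selfOrb G ⟶ indObj H.subtype S where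
  toFun g := Quotient.mk (indSetoid H.subtype S) (g, f.toFun 1)
  map_smul g a := by
    erw [indSmul_mk]
    rfl

/-- The inverse of `indHom H (𝟙 _)`. -/
def indSelfInv : indObj H.subtype (selfOrb ↥H) ⟶ selfOrb G where
  toFun := Quotient.lift (fun p => p.1 * H.subtype p.2) (by
    rintro p q ⟨h, h1, h2⟩
    dsimp only
    rw [h1, h2, smul_eq_mul, map_mul, mul_assoc])
  map_smul := by
    rintro g ⟨p⟩
    show (g * p.1) * H.subtype p.2 = g • (p.1 * H.subtype p.2)
    rw [smul_eq_mul, mul_assoc]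

/-- The isomorphism `selfOrb G ≅ indObj ι (selfOrb H)`, `g ↦ [g,1]`. -/
def indSelfIso : selfOrb G ≅ indObj H.subtype (selfOrb ↥H) where
  hom := indHom H (𝟙 (selfOrb ↥H))
  inv := indSelfInv H
  hom_inv_id := OrbHom.ext (funext fun g => by
    show (g : G) * H.subtype (1 : ↥H) = g
    simp)
  inv_hom_id := OrbHom.ext (funext (by
    rintro ⟨p⟩
    show Quotient.mk (indSetoid H.subtype (selfOrb ↥H)) (p.1 * H.subtype p.2, (1 : ↥H)) =
      Quotient.mk _ p
    refine Quotient.sound ⟨p.2, rfl, ?_⟩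
    show p.2 = p.2 * 1
    simp))

lemma e0_core (f : ↥H) (g : G) :
    Quotient.mk (indSetoid H.subtype (selfOrb ↥H)) (g * (H.subtype f)⁻¹, (1 : ↥H)) =
    Quotient.mk (indSetoid H.subtype (selfOrb ↥H)) (g, 1 * f⁻¹) := by
  refine Quotient.sound ⟨f⁻¹, by rw [map_inv], ?_⟩
  show (1 : ↥H) * f⁻¹ = f⁻¹ * 1
  simp

/-- The natural isomorphism `Bι ⋙ j^G ≅ j^H ⋙ indOrb ι`. -/
def e0 : Bhom H.subtype ⋙ jG G ≅ jG ↥H ⋙ indOrb H.subtype :=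
  NatIso.ofComponents (fun _ => indSelfIso H) (by
    intro x y f
    apply OrbHom.ext
    funext g
    exact e0_core H (un f) g)

lemma costPhi_w (S : GOrb ↥H) (f f' : selfOrb ↥H ⟶ S) (h : ↥H)
    (hw : rmul ↥H h ≫ f' = f) (g : G) :
    Quotient.mk (indSetoid H.subtype S) (g * (H.subtype h)⁻¹, f'.toFun 1) =
    Quotient.mk (indSetoid H.subtype S) (g, f.toFun 1) := by
  refine Quotient.sound ⟨h⁻¹, by rw [map_inv], ?_⟩
  have h1 : f'.toFun (1 * h⁻¹) = f.toFun 1 := congrFun (congrArg OrbHom.toFun hw) 1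
  show f.toFun 1 = h⁻¹ • f'.toFun 1
  rw [← h1, one_mul, hom_toFun_eq f' h⁻¹]

/-- The comparison functor between costructured arrow categories. -/
def costPhi (S : GOrb ↥H) :
    CostructuredArrow (jG ↥H) S ⥤ CostructuredArrow (jG G) (indObj H.subtype S) where
  obj f := CostructuredArrow.mk (Y := SingleObj.star G) (indHom H f.hom)
  map {f f'} φ := CostructuredArrow.homMk (H.subtype (un φ.left)) (by
    apply OrbHom.ext
    funext g
    exact costPhi_w H S f.hom f'.hom (un φ.left) (CostructuredArrow.w φ) g)
  map_id f := by
    apply CostructuredArrow.hom_ext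
    show H.subtype (1 : ↥H) = (1 : G)
    simp
  map_comp {f f' f''} φ ψ := by
    apply CostructuredArrow.hom_ext
    show H.subtype (un ψ.left * un φ.left) = H.subtype (un ψ.left) * H.subtype (un φ.left)
    rw [map_mul]

instance (S : GOrb ↥H) : (costPhi H S).Faithful where
  map_injective {f f'} {φ ψ} h := by
    apply CostructuredArrow.hom_ext
    have h1 : H.subtype (un φ.left) = H.subtype (un ψ.left) :=
      congrArg CommaMorphism.left h
    exact H.subtype_injective h1

lemma full_core (S : GOrb ↥H) (f f' : selfOrb ↥H ⟶ S) (h : ↥H)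
    (hh2 : f.toFun 1 = h • f'.toFun 1) (x : ↥H) :
    f'.toFun (x * h⁻¹⁻¹) = f.toFun x := by
  rw [inv_inv, hom_toFun_eq f' (x * h), hom_toFun_eq f x, mul_smul, ← hh2]

instance (S : GOrb ↥H) : (costPhi H S).Full where
  map_surjective {f f'} u := by
    have h1 : Quotient.mk (indSetoid H.subtype S)
        ((1 : G) * (un u.left)⁻¹, f'.hom.toFun (1 : ↥H)) =
        Quotient.mk (indSetoid H.subtype S) ((1 : G), f.hom.toFun (1 : ↥H)) :=
      congrFun (congrArg OrbHom.toFun (CostructuredArrow.w u)) ((1 : G))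
    obtain ⟨h, hh1, hh2⟩ := Quotient.exact h1
    have hg : un u.left = H.subtype h⁻¹ := by
      have hh1' : (1 : G) * (un u.left)⁻¹ = (1 : G) * H.subtype h := hh1
      rw [one_mul, one_mul] at hh1'
      rw [map_inv, ← hh1', inv_inv]
    refine ⟨CostructuredArrow.homMk (show f.left ⟶ f'.left from (show ↥H from h⁻¹)) ?_, ?_⟩
    · apply OrbHom.ext
      funext x
      exact full_core H S f.hom f'.hom h hh2 x
    · apply CostructuredArrow.hom_ext
      show H.subtype h⁻¹ = un u.left
      rw [hg]

lemma ess_core (S : GOrb ↥H) (k : selfOrb G ⟶ indObj H.subtype S) (g₀ : G) (s₀ : S.α)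
    (hrep : Quotient.mk (indSetoid H.subtype S) (g₀, s₀) = k.toFun 1) (x : G) :
    k.toFun (x * g₀⁻¹) = Quotient.mk (indSetoid H.subtype S) (x, (1 : ↥H) • s₀) := by
  rw [hom_toFun_eq k (x * g₀⁻¹), ← hrep, one_smul]
  erw [indSmul_mk]
  have hx : x * g₀⁻¹ * g₀ = x := by rw [mul_assoc]; simp
  rw [hx]

instance (S : GOrb ↥H) : (costPhi H S).EssSurj where
  mem_essImage Y := by
    obtain ⟨⟨g₀, s₀⟩, hrep⟩ := Quotient.exists_rep (Y.hom.toFun ((1 : G)))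
    refine ⟨CostructuredArrow.mk (Y := SingleObj.star ↥H)
      (⟨fun h => h • s₀, fun a x => mul_smul a x s₀⟩ : selfOrb ↥H ⟶ S), ⟨?_⟩⟩
    refine CostructuredArrow.isoMk
      (show SingleObj.star G ≅ Y.left from
        { hom := show SingleObj.star G ⟶ Y.left from (show G from g₀)
          inv := show Y.left ⟶ SingleObj.star G from (show G from g₀⁻¹)
          hom_inv_id := (by simp : g₀⁻¹ * g₀ = (1 : G))
          inv_hom_id := (by simp : g₀ * g₀⁻¹ = (1 : G)) }) ?_
    apply OrbHom.ext
    funext x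
    exact ess_core H S Y.hom g₀ s₀ hrep x

instance (S : GOrb ↥H) : (costPhi H S).IsEquivalence := {}

end Aux

end FJ

namespace FJ

open CategoryTheory Limits Presheaf

set_option synthInstance.maxHeartbeats 1000000 in
lemma hasPointwiseLKE {G : Type u} [Group G] {K : Type v} [Category.{w} K]
    [HasColimitsOfSize.{u, u + 1} K] (C : SingleObj G ⥤ K) :
    Functor.HasPointwiseLeftKanExtension (jG G) C := by
  have hKc : HasColimitsOfSize.{u, u} K := hasColimitsOfSizeShrink.{u, u, u, u + 1} K
  intro Y
  infer_instance

section PshLKE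

universe u₁ v₁ u₂ v₂

/-- Generalization of `Presheaf.isLeftKanExtension_of_preservesColimits` to a target category
whose morphism universe is not tied to that of `C`. -/
lemma isLKE_of_preservesColimits {C : Type u₁} [Category.{v₁} C] {ℰ : Type u₂} [Category.{v₂} ℰ]
    {A : C ⥤ ℰ} (L : (Cᵒᵖ ⥤ Type v₁) ⥤ ℰ) (e : A ≅ yoneda ⋙ L)
    [PreservesColimitsOfSize.{v₁, max u₁ v₁} L] : L.IsLeftKanExtension e.hom := by
  apply Functor.LeftExtension.IsPointwiseLeftKanExtension.isLeftKanExtension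
    (E := Functor.LeftExtension.mk _ e.hom)
  intro P
  dsimp [Functor.LeftExtension.IsPointwiseLeftKanExtensionAt]
  apply IsColimit.ofWhiskerEquivalence (CategoryOfElements.costructuredArrowYonedaEquivalence _)
  let i : CategoryOfElements.toCostructuredArrow P ⋙ CostructuredArrow.proj yoneda P ⋙ A ≅
      functorToRepresentables.{v₁} P ⋙ L :=
    Functor.isoWhiskerLeft _ (Functor.isoWhiskerLeft _ e) ≪≫
      Functor.isoWhiskerLeft _ (Functor.associator _ _ _).symm ≪≫
      (Functor.associator _ _ _).symm ≪≫ Functor.isoWhiskerRight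
        (NatIso.ofComponents (fun _ => NatIso.ofComponents (fun _ => Equiv.ulift.toIso)) :
          functorToRepresentables.{v₁} P ≅
            CategoryOfElements.toCostructuredArrow P ⋙ CostructuredArrow.proj yoneda P ⋙ yoneda).symm L
  apply (IsColimit.precomposeHomEquiv i.symm _).1
  exact IsColimit.ofIsoColimit (isColimitOfPreserves L (colimitOfRepresentable.{v₁} P))
    (Cocones.ext (Iso.refl _) (fun j => by
      simp [i, Cocone.precompose, Cocone.whisker, Functor.LeftExtension.coconeAt,
        Functor.whiskerLeft, CategoryOfElements.costructuredArrowYonedaEquivalence]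
      erw [e.inv_hom_id_app_assoc, Category.comp_id, ← L.map_comp]
      congr 1))

end PshLKE

/-- for a subgroup `H ≤ G` and coefficients `C : BG ⥤ K`, there is a natural
isomorphism `F_{res^G_H C} ≅ F_C ∘ ind_ι` of functors `PSh(HOrb) ⥤ M`, where
`res^G_H C = C ∘ Bι` and `ind_ι` is the colimit-preserving extension of `yo_G ∘ (G ×_ι −)`. -/
theorem statement14 {G : Type u} [Group G] (H : Subgroup G)
    {K : Type v} [Category.{w} K] [HasColimitsOfSize.{u, u + 1} K]
    {M : Type v'} [Category.{w'} M] [HasColimitsOfSize.{u, u + 1} M]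
    (F : K ⥤ M)
    (C : SingleObj G ⥤ K)
    -- `C_G`: a left Kan extension of `C` along `j^G`
    (CG : GOrb G ⥤ K) (α : C ⟶ jG G ⋙ CG) [CG.IsLeftKanExtension α]
    -- `F_C`: the colimit-preserving extension of `FC_G = F ∘ C_G` along the Yoneda embedding
    (FC : PSh G ⥤ M) [PreservesColimitsOfSize.{u, u + 1} FC]
    (eC : yoneda ⋙ FC ≅ CG ⋙ F)
    -- `(res^G_H C)_H`: a left Kan extension of `res^G_H C = C ∘ Bι` along `j^H`
    (CH : GOrb ↥H ⥤ K) (αH : Bhom H.subtype ⋙ C ⟶ jG ↥H ⋙ CH) [CH.IsLeftKanExtension αH]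
    -- `F_{res^G_H C}`
    (FCH : PSh ↥H ⥤ M) [PreservesColimitsOfSize.{u, u + 1} FCH]
    (eH : yoneda ⋙ FCH ≅ CH ⋙ F)
    -- `ind_ι`: the colimit-preserving extension of presheaf induction,
    -- with `ind_ι ∘ yo_H ≅ yo_G ∘ (G ×_ι −)`
    (ind : PSh ↥H ⥤ PSh G) [PreservesColimitsOfSize.{u, u + 1} ind]
    (eInd : (yoneda : GOrb ↥H ⥤ PSh ↥H) ⋙ ind ≅ indOrb H.subtype ⋙ yoneda) :
    Nonempty (FCH ≅ ind ⋙ FC) := by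
  haveI := hasPointwiseLKE C
  -- the transformation exhibiting `indOrb ⋙ CG` as a left Kan extension of `Bι ⋙ C`
  let β : Bhom H.subtype ⋙ C ⟶ jG ↥H ⋙ (indOrb H.subtype ⋙ CG) :=
    Functor.whiskerLeft (Bhom H.subtype) α ≫ Functor.whiskerRight (e0 H).hom CG
  -- `(CG, α)` is a pointwise left Kan extension
  have hpt := Functor.isPointwiseLeftKanExtensionOfIsLeftKanExtension CG α
  -- hence `(indOrb ⋙ CG, β)` is a pointwise left Kan extension
  have hpt' : (Functor.LeftExtension.mk (indOrb H.subtype ⋙ CG) β).IsPointwiseLeftKanExtension :=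
    fun S => by
      have P := hpt (indObj H.subtype S)
      have Q := P.whiskerEquivalence (costPhi H S).asEquivalence
      refine IsColimit.ofIsoColimit Q (Cocones.ext (Iso.refl _) (fun f => ?_))
      have key : (indHom H f.hom : selfOrb G ⟶ indObj H.subtype S) =
          (indSelfIso H).hom ≫ indMap H.subtype f.hom := OrbHom.ext (funext fun g => rfl)
      dsimp
      refine (Category.comp_id _).trans ?_
      show α.app (SingleObj.star G) ≫ CG.map (indHom H f.hom) =
        (α.app ((Bhom H.subtype).obj f.left) ≫ CG.map ((indSelfIso H).hom)) ≫
          CG.map (indMap H.subtype f.hom)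
      rw [key]
      exact (congrArg (fun t => α.app (SingleObj.star G) ≫ t) (CG.map_comp _ _)).trans
        (Category.assoc _ _ _).symm
  have hβ : (indOrb H.subtype ⋙ CG).IsLeftKanExtension β := hpt'.isLeftKanExtension
  -- uniqueness of left Kan extensions: `CH ≅ indOrb ⋙ CG`
  let iCH : CH ≅ indOrb H.subtype ⋙ CG :=
    Functor.leftKanExtensionUnique CH αH (indOrb H.subtype ⋙ CG) β
  -- both `FCH` and `ind ⋙ FC` are left Kan extensions of `CH ⋙ F` along yoneda
  let e2 : CH ⋙ F ≅ yoneda ⋙ (ind ⋙ FC) :=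
    Functor.isoWhiskerRight iCH F ≪≫ Functor.associator _ _ _ ≪≫
      Functor.isoWhiskerLeft (indOrb H.subtype) eC.symm ≪≫
      (Functor.associator _ _ _).symm ≪≫
      Functor.isoWhiskerRight eInd.symm FC ≪≫ Functor.associator _ _ _
  have h1 : FCH.IsLeftKanExtension eH.symm.hom := isLKE_of_preservesColimits FCH eH.symm
  have h2 : (ind ⋙ FC).IsLeftKanExtension e2.hom := isLKE_of_preservesColimits _ e2
  exact ⟨Functor.leftKanExtensionUnique FCH eH.symm.hom (ind ⋙ FC) e2.hom⟩

end FJ
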